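/- For n ≥ k ≥ 1, the n-th derivative at x = 0 of the function x ↦ (ln(1+x))^k / k! equals the signed Stirling number of the first kind s(n,k). -/

import Mathlib

open Real Finset

/-- Signed Stirling numbers of the first kind, via the recurrence
`s(n+1,k) = s(n,k-1) - n·s(n,k)`, with `s(0,0)=1`. -/
def stirlingFirst : ℕ → ℕ → ℤ
  | 0, 0 => 1
  | 0, _ + 1 => 0
  | _ + 1, 0 => 0
  | n + 1, k + 1 => stirlingFirst n k - n * stirlingFirst n (k + 1)

noncomputable def F (k : ℕ) : ℝ → ℝ := fun x => (Real.log (1 + x)) ^ k / (Nat.factorial k)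

lemma aux_diff {f : ℝ → ℝ} {s : Set ℝ} (hs : IsOpen s) (hf : ContDiffOn ℝ ⊤ f s) (n : ℕ)
    {x : ℝ} (hx : x ∈ s) : DifferentiableAt ℝ (iteratedDeriv n f) x := by
  have h1 : DifferentiableWithinAt ℝ (iteratedDerivWithin n f s) s x :=
    hf.differentiableOn_iteratedDerivWithin (by exact_mod_cast WithTop.coe_lt_top (n : ℕ∞))
      hs.uniqueDiffOn x hx
  have h2 : DifferentiableAt ℝ (iteratedDerivWithin n f s) x :=
    h1.differentiableAt (hs.mem_nhds hx)
  have heq : iteratedDerivWithin n f s =ᶠ[nhds x] iteratedDeriv n f := by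
    filter_upwards [hs.mem_nhds hx] with y hy
    rw [iteratedDerivWithin_eq_iteratedFDerivWithin, iteratedFDerivWithin_of_isOpen n hs hy,
      iteratedDeriv_eq_iteratedFDeriv]
  exact (Filter.EventuallyEq.differentiableAt_iff heq).mp h2

lemma hF (k : ℕ) : ContDiffOn ℝ ⊤ (F k) (Set.Ioi (-1 : ℝ)) := by
  apply ContDiffOn.div_const
  apply ContDiffOn.pow
  intro x hx
  have h1 : (1 : ℝ) + x ≠ 0 := by simp only [Set.mem_Ioi] at hx; linarith
  exact ((Real.contDiffAt_log.mpr h1).comp x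
    ((contDiffAt_const (c := (1:ℝ))).add contDiffAt_id)).contDiffWithinAt

lemma hasDerivF (k : ℕ) {x : ℝ} (hx : x ∈ Set.Ioi (-1 : ℝ)) :
    HasDerivAt (F (k + 1)) (F k x / (1 + x)) x := by
  have h1 : (1 : ℝ) + x ≠ 0 := by simp only [Set.mem_Ioi] at hx; linarith
  have hlog : HasDerivAt (fun x : ℝ => Real.log (1 + x)) (1 / (1 + x)) x := by
    simpa using ((hasDerivAt_id x).const_add 1).log h1
  have h2 := (hlog.pow (k + 1)).div_const ((k + 1).factorial : ℝ)
  convert h2 using 1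
  · rfl
  · rfl
  · rfl
  have hkf : ((k + 1).factorial : ℝ) = (k + 1) * k.factorial := by
    rw [Nat.factorial_succ]; push_cast; ring
  rw [hkf]
  simp only [F, Nat.add_sub_cancel]
  field_simp [F, Nat.factorial_ne_zero]
  push_cast
  ring

lemma key_rec (k n : ℕ) : ∀ x ∈ Set.Ioi (-1 : ℝ),
    (1 + x) * iteratedDeriv (n + 1) (F (k + 1)) x =
      iteratedDeriv n (F k) x - n * iteratedDeriv n (F (k + 1)) x := by
  induction n with
  | zero =>
    intro x hx
    have h1 : (1 : ℝ) + x ≠ 0 := by simp only [Set.mem_Ioi] at hx; linarith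
    rw [iteratedDeriv_one, iteratedDeriv_zero, (hasDerivF k hx).deriv]
    field_simp
    simp
  | succ n ih =>
    intro x hx
    have hsopen : IsOpen (Set.Ioi (-1 : ℝ)) := isOpen_Ioi
    have hd1 : HasDerivAt (iteratedDeriv (n + 1) (F (k + 1)))
        (iteratedDeriv (n + 2) (F (k + 1)) x) x := by
      rw [iteratedDeriv_succ (n := n + 1)]
      exact (aux_diff hsopen (hF (k + 1)) (n + 1) hx).hasDerivAt
    have hd2 : HasDerivAt (iteratedDeriv n (F k)) (iteratedDeriv (n + 1) (F k) x) x := by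
      rw [iteratedDeriv_succ]
      exact (aux_diff hsopen (hF k) n hx).hasDerivAt
    have hd3 : HasDerivAt (iteratedDeriv n (F (k + 1))) (iteratedDeriv (n + 1) (F (k + 1)) x) x := by
      rw [iteratedDeriv_succ]
      exact (aux_diff hsopen (hF (k + 1)) n hx).hasDerivAt
    have hL : HasDerivAt (fun y => (1 + y) * iteratedDeriv (n + 1) (F (k + 1)) y)
        (iteratedDeriv (n + 1) (F (k + 1)) x + (1 + x) * iteratedDeriv (n + 2) (F (k + 1)) x) x := by
      have h := (((hasDerivAt_id x).const_add 1).mul hd1)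
      simp only [id_eq, one_mul] at h
      exact h
    have hR : HasDerivAt (fun y => iteratedDeriv n (F k) y - n * iteratedDeriv n (F (k + 1)) y)
        (iteratedDeriv (n + 1) (F k) x - n * iteratedDeriv (n + 1) (F (k + 1)) x) x :=
      hd2.sub (hd3.const_mul _)
    have heq : (fun y => (1 + y) * iteratedDeriv (n + 1) (F (k + 1)) y) =ᶠ[nhds x]
        (fun y => iteratedDeriv n (F k) y - n * iteratedDeriv n (F (k + 1)) y) := by
      filter_upwards [hsopen.mem_nhds hx] with y hy
      exact ih y hy
    have := hL.deriv ▸ hR.deriv ▸ Filter.EventuallyEq.deriv_eq heq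
    push_cast
    linarith [this]

lemma iter_deriv_zero_fun : ∀ n : ℕ, iteratedDeriv n (fun _ : ℝ => (0:ℝ)) = fun _ => 0 := by
  intro n
  induction n with
  | zero => rw [iteratedDeriv_zero]
  | succ n ih => rw [iteratedDeriv_succ', deriv_const']; exact ih

lemma main_lemma (n : ℕ) : ∀ k : ℕ, iteratedDeriv n (F k) 0 = (stirlingFirst n k : ℝ) := by
  induction n with
  | zero =>
    intro k
    rw [iteratedDeriv_zero]
    cases k with
    | zero => simp [F, stirlingFirst]
    | succ k => simp [F, stirlingFirst, Real.log_one]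
  | succ n ih =>
    intro k
    cases k with
    | zero =>
      have hF0 : F 0 = fun _ : ℝ => (1 : ℝ) := by
        funext x; simp [F]
      rw [hF0, iteratedDeriv_succ', deriv_const', iter_deriv_zero_fun]
      simp [stirlingFirst]
    | succ k =>
      have h0 : (0 : ℝ) ∈ Set.Ioi (-1 : ℝ) := by norm_num
      have := key_rec k n 0 h0
      rw [add_zero, one_mul] at this
      rw [this, ih k, ih (k + 1)]
      show _ = ((stirlingFirst n k - n * stirlingFirst n (k + 1) : ℤ) : ℝ)
      push_cast
      ring

/-- (ln(1+x))ᵏ/k! is the exponential generating function of s(n,k). -/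
theorem stmt_5 (n k : ℕ) (hk : 1 ≤ k) (hn : k ≤ n) :
    iteratedDeriv n (fun x : ℝ => (Real.log (1 + x)) ^ k / (Nat.factorial k)) 0 =
      (stirlingFirst n k : ℝ) := by
  exact main_lemma n k
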